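/- Let G be a topological group acting continuously and freely on a topological space X. The action is proper (i.e., the map X × G → X × X, (x,g) ↦ (x, x·g), is a proper map) if and only if the quotient space X/G is Hausdorff and the translation map τ : X ×_G X → G is continuous. -/

import Mathlib

/-- A continuous free action is proper (i.e. `(x,g) ↦ (x, g • x)` is a
proper map `X × G → X × X`) iff the quotient `X/G` is Hausdorff and the translation
map `τ : X ×_G X → G` is continuous. -/
theorem proper_iff_t2_quotient_and_translation_continuous {G X : Type*} [Group G]
    [MulAction G X] [TopologicalSpace G] [TopologicalSpace X] [IsTopologicalGroup G]
    (hcont : Continuous (fun p : X × G => p.2 • p.1))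
    (hfree : ∀ (g : G) (x : X), g • x = x → g = 1)
    (τ : {q : X × X // q.2 ∈ MulAction.orbit G q.1} → G)
    (hτ : ∀ (x : X) (g : G), τ ⟨(x, g • x), g, rfl⟩ = g) :
    IsProperMap (fun p : X × G => (p.1, p.2 • p.1)) ↔
    (T2Space (Quotient (MulAction.orbitRel G X)) ∧ Continuous τ) := by
  -- key: τ q translates q.1.1 to q.1.2
  have key : ∀ q : {q : X × X // q.2 ∈ MulAction.orbit G q.1},
      τ q • (q : X × X).1 = (q : X × X).2 := by
    rintro ⟨⟨x, y⟩, g, hg⟩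
    have heq : (⟨(x, y), g, hg⟩ : {q : X × X // q.2 ∈ MulAction.orbit G q.1}) =
        ⟨(x, g • x), g, rfl⟩ := by
      apply Subtype.ext
      simp only at hg
      simp [hg]
    rw [heq, hτ]
  have hγcont : Continuous (fun p : X × G => (p.1, p.2 • p.1)) :=
    continuous_fst.prodMk hcont
  constructor
  · intro hp
    have hps : ProperSMul G X := by
      constructor
      have heq : (fun gx : G × X => (gx.1 • gx.2, gx.2)) =
          Prod.swap ∘ (fun p : X × G => (p.1, p.2 • p.1)) ∘ Prod.swap := rfl
      rw [heq]
      exact ((Homeomorph.prodComm X X).isProperMap.comp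
        (hp.comp (Homeomorph.prodComm G X).isProperMap))
    refine ⟨t2Space_quotient_mulAction_of_properSMul (G := G) (X := X), ?_⟩
    -- γ is injective by freeness
    have hinj : Function.Injective (fun p : X × G => (p.1, p.2 • p.1)) := by
      rintro ⟨x, g⟩ ⟨x', g'⟩ h
      simp only [Prod.mk.injEq] at h
      obtain ⟨rfl, h2⟩ := h
      have h3 : (g'⁻¹ * g) • x = x := by rw [mul_smul, h2, inv_smul_smul]
      have h4 := hfree _ _ h3
      have h5 : g = g' := by rwa [inv_mul_eq_one, eq_comm] at h4
      simp [h5]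
    have hce : Topology.IsClosedEmbedding (fun p : X × G => (p.1, p.2 • p.1)) :=
      Topology.IsClosedEmbedding.of_continuous_injective_isClosedMap hγcont hinj hp.isClosedMap
    have hσ : Continuous (fun q : {q : X × X // q.2 ∈ MulAction.orbit G q.1} =>
        ((q : X × X).1, τ q)) := by
      rw [hce.isEmbedding.continuous_iff]
      have heq : ((fun p : X × G => (p.1, p.2 • p.1)) ∘
          fun q : {q : X × X // q.2 ∈ MulAction.orbit G q.1} => ((q : X × X).1, τ q)) =
          Subtype.val := by
        funext q
        simp only [Function.comp_apply, key q]
      rw [heq]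
      exact continuous_subtype_val
    exact hσ.snd
  · rintro ⟨ht2, hτc⟩
    -- R is closed in X × X
    have hclosed : IsClosed {q : X × X | q.2 ∈ MulAction.orbit G q.1} := by
      have heq : {q : X × X | q.2 ∈ MulAction.orbit G q.1} =
          (fun q : X × X => ((⟦q.1⟧ : Quotient (MulAction.orbitRel G X)), (⟦q.2⟧ :
            Quotient (MulAction.orbitRel G X)))) ⁻¹' Set.diagonal _ := by
        ext ⟨x, y⟩
        simp only [Set.mem_setOf_eq, Set.mem_preimage, Set.mem_diagonal_iff]
        rw [Quotient.eq]
        constructor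
        · intro h
          exact Setoid.symm' _ ((MulAction.orbitRel_apply (G := G)).mpr h)
        · intro h
          exact (MulAction.orbitRel_apply (G := G)).mp (Setoid.symm' _ h)
      rw [heq]
      have hdiag : IsClosed (Set.diagonal (Quotient (MulAction.orbitRel G X))) :=
        isClosed_diagonal
      exact hdiag.preimage ((continuous_quotient_mk'.comp continuous_fst).prodMk
        (continuous_quotient_mk'.comp continuous_snd))
    have hval : IsProperMap
        (Subtype.val : {q : X × X // q.2 ∈ MulAction.orbit G q.1} → X × X) :=
      hclosed.isClosedEmbedding_subtypeVal.isProperMap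
    let γ' : X × G → {q : X × X // q.2 ∈ MulAction.orbit G q.1} :=
      fun p => ⟨(p.1, p.2 • p.1), p.2, rfl⟩
    let σ : {q : X × X // q.2 ∈ MulAction.orbit G q.1} → X × G :=
      fun q => ((q : X × X).1, τ q)
    have hli : Function.LeftInverse σ γ' := by
      rintro ⟨x, g⟩
      simp only [σ, γ']
      rw [hτ]
    have hri : Function.RightInverse σ γ' := by
      intro q
      apply Subtype.ext
      simp only [γ', σ, key q]
    let e : (X × G) ≃ₜ {q : X × X // q.2 ∈ MulAction.orbit G q.1} :=
      ⟨⟨γ', σ, hli, hri⟩, (hγcont.subtype_mk _), (continuous_subtype_val.fst.prodMk hτc)⟩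
    have heq : (fun p : X × G => (p.1, p.2 • p.1)) = Subtype.val ∘ γ' := rfl
    rw [heq]
    exact hval.comp e.isProperMap
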